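/- Let a ∈ ℝ³ with 0 < ‖a‖ < 1, let β ∈ ℝ with (1/2)(1 − ‖a‖²) < β < 1 − ‖a‖², and let b ∈ ℝ³ with a·b = 0 and ‖b‖ = β. Then the simple qubit observables E^{1,a} and E^{β,b} are jointly measurable, but they have no maximal joint observable: there is no joint observable G of E^{1,a} and E^{β,b} such that for all i, j ∈ {0,1} the effect G(i,j) is a maximal element of lb(E^{1,a}(i), E^{β,b}(j)). -/

import Mathlib

open Matrix
open scoped ComplexOrder

noncomputable section

/-- 2×2 complex matrices. -/
abbrev Mat2 := Matrix (Fin 2) (Fin 2) ℂ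

/-- The Pauli matrix σ₁. -/
def sigma1 : Mat2 := !![0, 1; 1, 0]
/-- The Pauli matrix σ₂. -/
def sigma2 : Mat2 := !![0, -Complex.I; Complex.I, 0]
/-- The Pauli matrix σ₃. -/
def sigma3 : Mat2 := !![1, 0; 0, -1]

/-- ℝ³ with the Euclidean norm. -/
abbrev E3 := EuclideanSpace ℝ (Fin 3)

/-- For `v ∈ ℝ³`, `v·σ = v₁σ₁ + v₂σ₂ + v₃σ₃`. -/
def dotSigma (v : E3) : Mat2 := (v 0 : ℂ) • sigma1 + (v 1 : ℂ) • sigma2 + (v 2 : ℂ) • sigma3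

/-- `A^{α,a} = (1/2)(α·I + a·σ)`. -/
def Amat (α : ℝ) (a : E3) : Mat2 := (2 : ℂ)⁻¹ • ((α : ℂ) • (1 : Mat2) + dotSigma a)

/-- An operator is an effect if `0 ≤ A ≤ I` in the Loewner order. -/
def IsEffect (A : Mat2) : Prop := A.PosSemidef ∧ (1 - A).PosSemidef

/-- The Loewner order: `A ≤ B` iff `B - A` is positive semidefinite. -/
def loewnerLE (A B : Mat2) : Prop := (B - A).PosSemidef

/-- The simple (two-outcome) qubit observable `E^{α,a}`,
with `E^{α,a}(1) = A^{α,a}` and `E^{α,a}(0) = I - A^{α,a}`. -/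
def Eobs (α : ℝ) (a : E3) : Fin 2 → Mat2 := fun i => if i = 1 then Amat α a else 1 - Amat α a

/-- `G` is a joint observable of the two-outcome observables `E` and `F`. -/
def IsJointObs (G : Fin 2 → Fin 2 → Mat2) (E F : Fin 2 → Mat2) : Prop :=
  (∀ i j, (G i j).PosSemidef) ∧ (∑ i, ∑ j, G i j) = 1 ∧
    (∀ i, (∑ j, G i j) = E i) ∧ (∀ j, (∑ i, G i j) = F j)

/-- Joint measurability of two two-outcome observables. -/
def JointlyMeasurable2 (E F : Fin 2 → Mat2) : Prop := ∃ G, IsJointObs G E F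

/-- `G` is a joint observable of the three two-outcome observables `E`, `F` and `K`. -/
def IsJointObs3 (G : Fin 2 → Fin 2 → Fin 2 → Mat2) (E F K : Fin 2 → Mat2) : Prop :=
  (∀ i j k, (G i j k).PosSemidef) ∧ (∑ i, ∑ j, ∑ k, G i j k) = 1 ∧
    (∀ i, (∑ j, ∑ k, G i j k) = E i) ∧ (∀ j, (∑ i, ∑ k, G i j k) = F j) ∧
    (∀ k, (∑ i, ∑ j, G i j k) = K k)

/-- Joint measurability of three two-outcome observables. -/
def JointlyMeasurable3 (E F K : Fin 2 → Mat2) : Prop := ∃ G, IsJointObs3 G E F K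

/-- `C` is a maximal element of `lb(A,B)`: it is an effect below both `A` and `B`, and
there is no effect `D` below both `A` and `B` with `C ≤ D` and `C ≠ D`. -/
def IsMaximalLB (C A B : Mat2) : Prop :=
  (IsEffect C ∧ loewnerLE C A ∧ loewnerLE C B) ∧
    ¬ ∃ D : Mat2, (IsEffect D ∧ loewnerLE D A ∧ loewnerLE D B) ∧ loewnerLE C D ∧ C ≠ D

lemma amat_entries (α : ℝ) (v : E3) :
    Amat α v = !![((α : ℂ) + v 2)/2, ((v 0 : ℂ) - v 1 * Complex.I)/2;
                  ((v 0 : ℂ) + v 1 * Complex.I)/2, ((α : ℂ) - v 2)/2] := by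
  ext i j
  fin_cases i <;> fin_cases j <;>
    simp [Amat, dotSigma, sigma1, sigma2, sigma3, Matrix.one_apply] <;> ring

lemma amat_add (α α' : ℝ) (v v' : E3) : Amat α v + Amat α' v' = Amat (α+α') (v+v') := by
  rw [amat_entries, amat_entries, amat_entries]
  ext i j
  fin_cases i <;> fin_cases j <;>
    simp [PiLp.add_apply] <;> push_cast <;> ring

lemma amat_one : Amat 2 0 = 1 := by
  rw [amat_entries]
  ext i j
  fin_cases i <;> fin_cases j <;> simp [Matrix.one_apply] <;> norm_num

lemma amat_smul (r α : ℝ) (v : E3) : r • Amat α v = Amat (r*α) (r • v) := by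
  rw [amat_entries, amat_entries]
  ext i j
  fin_cases i <;> fin_cases j <;>
    simp [PiLp.smul_apply, Complex.real_smul, smul_eq_mul] <;> push_cast <;> ring

lemma amat_sub (α α' : ℝ) (v v' : E3) : Amat α v - Amat α' v' = Amat (α-α') (v-v') := by
  rw [amat_entries, amat_entries, amat_entries]
  ext i j
  fin_cases i <;> fin_cases j <;>
    simp [PiLp.sub_apply] <;> push_cast <;> ring

lemma one_sub_amat (α : ℝ) (v : E3) : (1 : Mat2) - Amat α v = Amat (2-α) (-v) := by
  rw [← amat_one, amat_sub]
  congr 1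
  simp

lemma amat_herm (α : ℝ) (v : E3) : (Amat α v).IsHermitian := by
  rw [Matrix.IsHermitian, amat_entries]
  ext i j
  fin_cases i <;> fin_cases j <;>
    simp [Matrix.conjTranspose_apply, Complex.ext_iff]

lemma norm_sq_E3 (v : E3) : ‖v‖^2 = v 0^2 + v 1^2 + v 2^2 := by
  rw [← real_inner_self_eq_norm_sq]
  simp only [PiLp.inner_apply, RCLike.inner_apply, Fin.sum_univ_three, conj_trivial]
  ring

lemma amat_sq (v : E3) : Amat ‖v‖ v * Amat ‖v‖ v = (‖v‖ : ℂ) • Amat ‖v‖ v := by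
  have hn : ((v 0 : ℂ))^2 + (v 1)^2 + (v 2)^2 = ((‖v‖ : ℂ))^2 := by
    exact_mod_cast (norm_sq_E3 v).symm
  rw [amat_entries]
  ext i j
  fin_cases i <;> fin_cases j <;>
    simp [Matrix.mul_apply, Fin.sum_univ_two, Complex.real_smul, smul_eq_mul]
  · linear_combination (1/4 : ℂ) * hn - ((v 1 : ℂ)^2/4) * Complex.I_sq
  · ring
  · ring
  · linear_combination (1/4 : ℂ) * hn - ((v 1 : ℂ)^2/4) * Complex.I_sq

lemma smul_one_psd {t : ℝ} (ht : 0 ≤ t) : ((t : ℂ) • (1 : Mat2)).PosSemidef := by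
  have h : ((t:ℂ) • (1 : Mat2)) = ((Real.sqrt t : ℂ) • 1)ᴴ * ((Real.sqrt t : ℂ) • 1) := by
    rw [Matrix.conjTranspose_smul, Matrix.conjTranspose_one, Matrix.smul_mul, Matrix.mul_smul,
      one_mul, smul_smul]
    congr 1
    rw [Complex.star_def, Complex.conj_ofReal, ← Complex.ofReal_mul, Real.mul_self_sqrt ht]
  rw [h]
  exact Matrix.posSemidef_conjTranspose_mul_self _

lemma amat_zero_vec (t : ℝ) : Amat t 0 = ((t/2 : ℝ) : ℂ) • 1 := by
  rw [amat_entries]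
  ext i j
  fin_cases i <;> fin_cases j <;> simp [Matrix.one_apply] <;> push_cast <;> ring

lemma amat_norm_psd (v : E3) : (Amat ‖v‖ v).PosSemidef := by
  rcases eq_or_lt_of_le (norm_nonneg v) with h0 | h0
  · have hv : v = 0 := norm_eq_zero.mp h0.symm
    rw [hv]
    simp only [norm_zero, amat_zero_vec]
    norm_num
    exact Matrix.PosSemidef.zero
  · set s := ‖v‖ with hs
    have hherm := amat_herm s v
    rw [Matrix.IsHermitian] at hherm
    have key : (((Real.sqrt s)⁻¹ : ℂ) • Amat s v)ᴴ * (((Real.sqrt s)⁻¹ : ℂ) • Amat s v)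
        = Amat s v := by
      rw [Matrix.conjTranspose_smul, hherm, Matrix.smul_mul, Matrix.mul_smul, amat_sq, smul_smul,
        smul_smul]
      rw [Complex.star_def, map_inv₀, Complex.conj_ofReal, ← hs]
      have hne : ((Real.sqrt s : ℝ) : ℂ) ≠ 0 :=
        Complex.ofReal_ne_zero.mpr (Real.sqrt_pos.mpr h0).ne'
      have h1 : ((Real.sqrt s : ℝ) : ℂ)⁻¹ * ((Real.sqrt s : ℝ) : ℂ)⁻¹ * (s : ℂ) = 1 := by
        field_simp
        rw [← Complex.ofReal_pow, Real.sq_sqrt h0.le]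
      rw [h1, one_smul]
    rw [← key]
    exact Matrix.posSemidef_conjTranspose_mul_self _

lemma amat_psd {α : ℝ} {v : E3} (h : ‖v‖ ≤ α) : (Amat α v).PosSemidef := by
  have hsplit : Amat α v = Amat ‖v‖ v + (((α - ‖v‖)/2 : ℝ) : ℂ) • 1 := by
    rw [← amat_zero_vec, amat_add]
    congr 1 <;> simp
  rw [hsplit]
  exact (amat_norm_psd v).add (smul_one_psd (by linarith))

lemma smul_amat_inj {β : ℝ} (hβ : β ≠ 0) (b : E3) {x y : ℝ}
    (h : x • Amat β b = y • Amat β b) : x = y := by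
  rw [amat_entries] at h
  have h0 := congrFun (congrFun h 0) 0
  have h1 := congrFun (congrFun h 1) 1
  simp only [Matrix.smul_apply, Matrix.cons_val', Matrix.cons_val_zero, Matrix.cons_val_one,
    Matrix.head_cons, Matrix.empty_val', Matrix.cons_val_fin_one, Matrix.of_apply,
    Matrix.vecHead, Matrix.vecTail, Function.comp, Complex.real_smul, smul_eq_mul] at h0 h1
  have hc : (x : ℂ) * (β:ℂ) = (y:ℂ) * (β:ℂ) := by linear_combination h0 + h1
  have hx : (x:ℂ) = y := mul_right_cancel₀ (Complex.ofReal_ne_zero.mpr hβ) hc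
  exact_mod_cast hx

lemma squeeze {β : ℝ} {b : E3} (hβ : 0 < β) (hb : ‖b‖ = β) {C : Mat2}
    (hC : C.PosSemidef) (hBC : (Amat β b - C).PosSemidef) :
    ∃ ρ : ℝ, C = ρ • Amat β b := by
  have hkey : ((b 0 : ℂ))^2 + (b 1)^2 + (b 2)^2 = ((β : ℂ))^2 := by
    have h : b 0^2 + b 1^2 + b 2^2 = β^2 := by rw [← norm_sq_E3, hb]
    exact_mod_cast h
  have hB := amat_entries β b
  -- kernel vectors of B
  have hk : Amat β b *ᵥ ![((b 0 : ℂ) - b 1 * Complex.I)/2, -(((β:ℂ) + b 2)/2)] = 0 := by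
    rw [hB]; funext i
    fin_cases i <;>
      simp [Matrix.mulVec, dotProduct, Fin.sum_univ_two]
    · ring
    · linear_combination (1/4 : ℂ) * hkey - ((b 1 : ℂ)^2/4) * Complex.I_sq
  have hk' : Amat β b *ᵥ ![((β:ℂ) - b 2)/2, -(((b 0 : ℂ) + b 1 * Complex.I)/2)] = 0 := by
    rw [hB]; funext i
    fin_cases i <;>
      simp [Matrix.mulVec, dotProduct, Fin.sum_univ_two]
    · linear_combination (-1/4 : ℂ) * hkey + ((b 1 : ℂ)^2/4) * Complex.I_sq
    · ring
  have hker : ∀ k : Fin 2 → ℂ, Amat β b *ᵥ k = 0 → C *ᵥ k = 0 := by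
    intro k hk0
    have h1 := hC.dotProduct_mulVec_nonneg k
    have h2 := hBC.dotProduct_mulVec_nonneg k
    rw [Matrix.sub_mulVec, hk0, zero_sub, dotProduct_neg] at h2
    have hzero : star k ⬝ᵥ C *ᵥ k = 0 := le_antisymm (neg_nonneg.mp h2) h1
    exact (hC.dotProduct_mulVec_zero_iff k).mp hzero
  have hCk := hker _ hk
  have hCk' := hker _ hk'
  have E1 := congrFun hCk 0
  have E2 := congrFun hCk 1
  have E3 := congrFun hCk' 0
  have E4 := congrFun hCk' 1
  simp [Matrix.mulVec, dotProduct, Fin.sum_univ_two, vecHead, vecTail] at E1 E2 E3 E4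
  have h10 : C 1 0 = starRingEnd ℂ (C 0 1) := (hC.1.apply 1 0).symm
  have h00 : (C 0 0) = ((C 0 0).re : ℂ) :=
    (Complex.conj_eq_iff_re.mp (hC.1.apply 0 0)).symm
  have h11 : (C 1 1) = ((C 1 1).re : ℂ) :=
    (Complex.conj_eq_iff_re.mp (hC.1.apply 1 1)).symm
  have E1c := congrArg (starRingEnd ℂ) E1
  have E2c := congrArg (starRingEnd ℂ) E2
  have E3c := congrArg (starRingEnd ℂ) E3
  have E4c := congrArg (starRingEnd ℂ) E4
  rw [h10] at E2 E4
  have h00c : (starRingEnd ℂ) (C 0 0) = C 0 0 := hC.1.apply 0 0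
  have h11c : (starRingEnd ℂ) (C 1 1) = C 1 1 := hC.1.apply 1 1
  simp only [_root_.map_add, _root_.map_neg, _root_.map_mul, map_div₀, _root_.map_sub,
    Complex.conj_ofReal, Complex.conj_I, Complex.conj_conj, _root_.map_zero, map_ofNat,
    h10, h00c, h11c] at E1c E2c E3c E4c
  have hβne : ((β : ℝ) : ℂ) ≠ 0 := Complex.ofReal_ne_zero.mpr hβ.ne'
  have g00 : C 0 0 * (β:ℂ) = ((C 0 0).re + (C 1 1).re : ℂ) * ((↑β + ↑(b 2))/2) := by
    linear_combination E3 + E2c + ((↑β + ↑(b 2))/2 : ℂ) * h00 + ((↑β + ↑(b 2))/2 : ℂ) * h11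
  have g01 : C 0 1 * (β:ℂ) = ((C 0 0).re + (C 1 1).re : ℂ) * ((↑(b 0) - ↑(b 1)*Complex.I)/2) := by
    linear_combination -E1 + E4c + ((↑(b 0) - ↑(b 1)*Complex.I)/2 : ℂ) * h00
      + ((↑(b 0) - ↑(b 1)*Complex.I)/2 : ℂ) * h11
  have g10 : C 1 0 * (β:ℂ) = ((C 0 0).re + (C 1 1).re : ℂ) * ((↑(b 0) + ↑(b 1)*Complex.I)/2) := by
    linear_combination -E1c + E4 + (β:ℂ) * h10 + ((↑(b 0) + ↑(b 1)*Complex.I)/2 : ℂ) * h00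
      + ((↑(b 0) + ↑(b 1)*Complex.I)/2 : ℂ) * h11
  have g11 : C 1 1 * (β:ℂ) = ((C 0 0).re + (C 1 1).re : ℂ) * ((↑β - ↑(b 2))/2) := by
    linear_combination -E2 - E3c + ((↑β - ↑(b 2))/2 : ℂ) * h00 + ((↑β - ↑(b 2))/2 : ℂ) * h11
  refine ⟨((C 0 0).re + (C 1 1).re)/β, ?_⟩
  rw [hB]
  ext i j
  fin_cases i <;> fin_cases j <;>
    simp [Complex.real_smul, Complex.ofReal_div] <;>
    rw [div_mul_eq_mul_div, eq_div_iff hβne] <;> push_cast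
  · linear_combination g00
  · linear_combination g01
  · linear_combination g10
  · linear_combination g11

lemma amat_congr {α α' : ℝ} {v v' : E3} (h1 : α = α') (h2 : v = v') :
    Amat α v = Amat α' v' := by rw [h1, h2]

/-- `E^{1,a}` and `E^{β,b}` are jointly measurable but have no maximal
joint observable. -/
theorem no_maximal_joint_observable (a : E3) (ha0 : 0 < ‖a‖) (ha1 : ‖a‖ < 1) (β : ℝ)
    (hβ1 : (1 - ‖a‖ ^ 2) / 2 < β) (hβ2 : β < 1 - ‖a‖ ^ 2)
    (b : E3) (hab : (inner ℝ a b : ℝ) = 0) (hb : ‖b‖ = β) :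
    JointlyMeasurable2 (Eobs 1 a) (Eobs β b) ∧
      ¬ ∃ G : Fin 2 → Fin 2 → Mat2, IsJointObs G (Eobs 1 a) (Eobs β b) ∧
          ∀ i j, IsMaximalLB (G i j) (Eobs 1 a i) (Eobs β b j) := by
  have ha2pos : 0 < ‖a‖^2 := pow_pos ha0 2
  have ha2lt : ‖a‖^2 < 1 := by nlinarith
  set c : ℝ := (1 - ‖a‖ ^ 2) / 2 with hcdef
  have hc0 : 0 < c := by rw [hcdef]; linarith
  have hc12 : c < 1/2 := by rw [hcdef]; linarith
  have hβ0 : 0 < β := hc0.trans hβ1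
  have hβne : β ≠ 0 := hβ0.ne'
  have hβ2c : β < 2*c := by rw [hcdef]; linarith
  have ha2 : ‖a‖^2 = 1 - 2*c := by rw [hcdef]; ring
  set t : ℝ := c/β with htdef
  have htβ : t*β = c := by rw [htdef]; field_simp
  have ht0 : 0 ≤ t := by positivity
  have ht1 : t < 1 := by rw [htdef, div_lt_one hβ0]; exact hβ1
  have htβ2 : t^2*β^2 = c^2 := by linear_combination (t*β + c) * htβ
  have h1tβ : (1-t)*β = β - c := by linear_combination -htβ
  have h1tβ2 : (1-t)^2*β^2 = (β-c)^2 := by linear_combination ((1-t)*β + (β-c)) * h1tβ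
  have hnormb : ∀ y : ℝ, 0 ≤ y → ‖y • b‖ = y * β := by
    intro y hy; rw [norm_smul, hb, Real.norm_eq_abs, abs_of_nonneg hy]
  have hcomb : ∀ x y : ℝ, ‖x • a + y • b‖^2 = x^2*‖a‖^2 + y^2*β^2 := by
    intro x y
    have hxy : (inner ℝ (x • a) (y • b) : ℝ) = 0 := by
      rw [real_inner_smul_left, real_inner_smul_right, hab]; ring
    rw [norm_add_sq_real, hxy, norm_smul, norm_smul, hb]
    simp [mul_pow, sq_abs]
  have hbound : ∀ x y u : ℝ, 0 ≤ u → x^2*‖a‖^2 + y^2*β^2 ≤ u^2 → ‖x • a + y • b‖ ≤ u := by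
    intro x y u hu h
    refine le_of_pow_le_pow_left₀ two_ne_zero hu ?_
    rw [hcomb]; exact h
  -- positivity of the four blocks
  have p11 : (Amat c (t • b)).PosSemidef :=
    amat_psd (le_of_eq (by rw [hnormb t ht0, htβ]))
  have p01 : (Amat (β - c) ((1-t) • b)).PosSemidef :=
    amat_psd (le_of_eq (by rw [hnormb (1-t) (by linarith), h1tβ]))
  have p10 : (Amat (1 - c) ((1:ℝ) • a + (-t) • b)).PosSemidef := by
    refine amat_psd (hbound 1 (-t) (1-c) (by linarith) ?_)
    nlinarith [htβ2, ha2]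
  have p10' : (Amat (1 - c) ((-1:ℝ) • a + (-t) • b)).PosSemidef := by
    refine amat_psd (hbound (-1) (-t) (1-c) (by linarith) ?_)
    nlinarith [htβ2, ha2]
  have p00 : (Amat (1-β+c) ((-1:ℝ) • a + (-(1-t)) • b)).PosSemidef := by
    refine amat_psd (hbound (-1) (-(1-t)) (1-β+c) (by linarith) ?_)
    nlinarith [h1tβ2, ha2]
  have hE0 : Eobs 1 a 0 = Amat 1 (-a) := by
    rw [show Eobs 1 a 0 = 1 - Amat 1 a from by simp [Eobs], one_sub_amat]
    exact amat_congr (by norm_num) rfl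
  have hE1 : Eobs 1 a 1 = Amat 1 a := by simp [Eobs]
  have hF1 : Eobs β b 1 = Amat β b := by simp [Eobs]
  have hF0 : Eobs β b 0 = Amat (2-β) (-b) := by
    rw [show Eobs β b 0 = 1 - Amat β b from by simp [Eobs], one_sub_amat]
  constructor
  · refine ⟨![![Amat (1-β+c) ((-1:ℝ) • a + (-(1-t)) • b), Amat (β-c) ((1-t) • b)],
             ![Amat (1-c) ((1:ℝ) • a + (-t) • b), Amat c (t • b)]], ?_, ?_, ?_, ?_⟩
    · intro i j
      fin_cases i <;> fin_cases j
      · exact p00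
      · exact p01
      · exact p10
      · exact p11
    · simp only [Fin.sum_univ_two, Matrix.cons_val_zero, Matrix.cons_val_one, Matrix.head_cons]
      rw [amat_add, amat_add, amat_add, ← amat_one]
      exact amat_congr (by ring) (by module)
    · intro i
      fin_cases i <;>
        simp only [Fin.sum_univ_two, Fin.isValue, Fin.mk_zero, Fin.mk_one, Matrix.cons_val_zero,
          Matrix.cons_val_one, Matrix.head_cons]
      · rw [hE0, amat_add]
        exact amat_congr (by ring) (by module)
      · rw [hE1, amat_add]
        exact amat_congr (by ring) (by module)
    · intro j
      fin_cases j <;>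
        simp only [Fin.sum_univ_two, Fin.isValue, Fin.mk_zero, Fin.mk_one, Matrix.cons_val_zero,
          Matrix.cons_val_one, Matrix.head_cons]
      · rw [hF0, amat_add]
        exact amat_congr (by ring) (by module)
      · rw [hF1, amat_add]
        exact amat_congr (by ring) (by module)
  · rintro ⟨G, hG, hmax⟩
    have hD : t • Amat β b = Amat c (t • b) := by rw [amat_smul, htβ]
    have pE : ∀ i : Fin 2, (Eobs 1 a i - Amat c (t • b)).PosSemidef := by
      intro i
      fin_cases i <;> simp only [Fin.isValue, Fin.mk_zero, Fin.mk_one]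
      · rw [hE0, amat_sub, show -a - t • b = (-1:ℝ) • a + (-t) • b from by module]
        exact p10'
      · rw [hE1, amat_sub, show a - t • b = (1:ℝ) • a + (-t) • b from by module]
        exact p10
    have key : ∀ i : Fin 2, ∃ ρ : ℝ, G i 1 = ρ • Amat β b ∧ t ≤ ρ := by
      intro i
      obtain ⟨⟨hEff, hLA, hLB⟩, hmaxi⟩ := hmax i 1
      have hLB' : (Amat β b - G i 1).PosSemidef := by
        have := hLB; rw [loewnerLE, hF1] at this; exact this
      obtain ⟨ρ, hρeq⟩ := squeeze hβ0 hb hEff.1 hLB'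
      refine ⟨ρ, hρeq, ?_⟩
      by_contra hlt
      push_neg at hlt
      refine hmaxi ⟨t • Amat β b, ⟨⟨?_, ?_⟩, ?_, ?_⟩, ?_, ?_⟩
      · rw [hD]; exact p11
      · rw [hD, one_sub_amat]
        refine amat_psd ?_
        rw [norm_neg, hnormb t ht0, htβ]
        linarith
      · rw [loewnerLE, hD]; exact pE i
      · rw [loewnerLE, hD, hF1, amat_sub, show b - t • b = (1-t) • b from by module]
        exact p01
      · rw [loewnerLE, hρeq, ← sub_smul, amat_smul]
        refine amat_psd (le_of_eq ?_)
        rw [hnormb (t - ρ) (by linarith)]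
      · rw [hρeq]
        intro h
        exact absurd (smul_amat_inj hβne b h) (ne_of_lt hlt)
    obtain ⟨ρ0, h0, hρ0⟩ := key 0
    obtain ⟨ρ1, h1, hρ1⟩ := key 1
    have hsum := hG.2.2.2 1
    rw [hF1, Fin.sum_univ_two, h0, h1, ← add_smul] at hsum
    have hρsum : ρ0 + ρ1 = 1 :=
      smul_amat_inj hβne b (by rw [hsum, one_smul])
    have ht2 : 1 < 2*t := by
      rw [htdef, ← mul_div_assoc]
      exact (one_lt_div hβ0).mpr hβ2c
    clear hsum h0 h1 hG hmax hD pE hE0 hE1 hF0 hF1 hnormb hcomb hbound p11 p01 p10 p10' p00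
    linarith
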